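/- For n ≥ 3, let P_2 = (n, n-1)···(n 2)(n 1) in S_n, viewed in S_{n+1}. If F is a product of k distinct transpositions in S_{n+1}, each distinct from all factors (i n) of P_2, and F · P_2 equals the identity, then k ≥ n + 1. -/

import Mathlib

namespace Stmt12Aux

def EdgeRel (L : List (ℕ × ℕ)) (x y : ℕ) : Prop :=
  ∃ p ∈ L, (p.1 = x ∧ p.2 = y) ∨ (p.1 = y ∧ p.2 = x)

def ReachN (L : List (ℕ × ℕ)) : ℕ → ℕ → ℕ → Prop
  | 0, r, x => r = x
  | (m+1), r, x => ∃ z, ReachN L m r z ∧ EdgeRel L z x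

def Reach (L : List (ℕ × ℕ)) (r x : ℕ) : Prop := ∃ m, ReachN L m r x

lemma reach_refl (L : List (ℕ × ℕ)) (x : ℕ) : Reach L x x := ⟨0, rfl⟩

lemma reach_tail {L : List (ℕ × ℕ)} {r x y : ℕ} (h : Reach L r x) (e : EdgeRel L x y) :
    Reach L r y := by
  obtain ⟨m, hm⟩ := h; exact ⟨m+1, x, hm, e⟩

lemma edge_symm {L : List (ℕ × ℕ)} {x y : ℕ} (e : EdgeRel L x y) : EdgeRel L y x := by
  obtain ⟨p, hp, h⟩ := e; exact ⟨p, hp, h.symm⟩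

lemma reach_trans {L : List (ℕ × ℕ)} {a b : ℕ} (hab : Reach L a b) :
    ∀ {c}, Reach L b c → Reach L a c := by
  rintro c ⟨m, hm⟩
  induction m generalizing c with
  | zero =>
    have h : b = c := hm
    exact h ▸ hab
  | succ m ih =>
    obtain ⟨z, hz, e⟩ := hm
    exact reach_tail (ih hz) e

lemma reach_symm {L : List (ℕ × ℕ)} {r x : ℕ} (h : Reach L r x) : Reach L x r := by
  obtain ⟨m, hm⟩ := h
  induction m generalizing x with
  | zero =>
    have h : r = x := hm
    exact h ▸ reach_refl L r
  | succ m ih =>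
    obtain ⟨z, hz, e⟩ := hm
    exact reach_trans ⟨1, x, rfl, edge_symm e⟩ (ih hz)

lemma reach_prod (L : List (ℕ × ℕ)) :
    ∀ (l : List (ℕ × ℕ)), (∀ p ∈ l, p ∈ L) → ∀ x : ℕ,
      Reach L x (((l.map fun p => Equiv.swap p.1 p.2).prod : Equiv.Perm ℕ) x) := by
  intro l
  induction l with
  | nil => intro _ x; simpa using reach_refl L x
  | cons p l ih =>
    intro hsub x
    rw [List.map_cons, List.prod_cons, Equiv.Perm.mul_apply]
    have h1 : Reach L x (((l.map fun p => Equiv.swap p.1 p.2).prod : Equiv.Perm ℕ) x) :=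
      ih (fun q hq => hsub q (List.mem_cons_of_mem _ hq)) x
    have hpL : p ∈ L := hsub p (List.mem_cons_self)
    set y := ((l.map fun p => Equiv.swap p.1 p.2).prod : Equiv.Perm ℕ) x with hy
    by_cases h2 : y = p.1
    · rw [h2, Equiv.swap_apply_left]
      exact reach_tail (h2 ▸ h1) ⟨p, hpL, Or.inl ⟨rfl, rfl⟩⟩
    by_cases h3 : y = p.2
    · rw [h3, Equiv.swap_apply_right]
      exact reach_tail (h3 ▸ h1) ⟨p, hpL, Or.inr ⟨rfl, rfl⟩⟩
    · rw [Equiv.swap_apply_of_ne_of_ne h2 h3]; exact h1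

lemma exists_swap_moves :
    ∀ (l : List (ℕ × ℕ)) (x : ℕ),
      ((l.map fun p => Equiv.swap p.1 p.2).prod : Equiv.Perm ℕ) x ≠ x →
      ∃ p ∈ l, Equiv.swap p.1 p.2 x ≠ x := by
  intro l
  induction l with
  | nil => intro x h; simp at h
  | cons p l ih =>
    intro x h
    rw [List.map_cons, List.prod_cons, Equiv.Perm.mul_apply] at h
    by_cases h2 : ((l.map fun p => Equiv.swap p.1 p.2).prod : Equiv.Perm ℕ) x = x
    · refine ⟨p, List.mem_cons_self, ?_⟩
      rwa [h2] at h
    · obtain ⟨q, hq, hq2⟩ := ih x h2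
      exact ⟨q, List.mem_cons_of_mem _ hq, hq2⟩

lemma card_le_of_reach (L : List (ℕ × ℕ)) (r : ℕ) (S : Finset ℕ)
    (h : ∀ x ∈ S, Reach L r x) : S.card ≤ L.length + 1 := by
  classical
  set d : ℕ → ℕ := fun x => sInf {m | ReachN L m r x} with hd
  have key : ∀ x ∈ S.erase r, ∃ p ∈ L,
      ((p.1 = x ∧ d p.2 < d x) ∨ (p.2 = x ∧ d p.1 < d x)) := by
    intro x hx
    have hxr : x ≠ r := Finset.ne_of_mem_erase hx
    have hxS : x ∈ S := Finset.mem_of_mem_erase hx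
    have hne : {m | ReachN L m r x}.Nonempty := h x hxS
    have hmem : ReachN L (d x) r x := Nat.sInf_mem hne
    have hd0 : d x ≠ 0 := by
      intro h0
      rw [h0] at hmem
      have : r = x := hmem
      exact hxr this.symm
    obtain ⟨m, hm⟩ := Nat.exists_eq_succ_of_ne_zero hd0
    rw [hm] at hmem
    obtain ⟨z, hz, e⟩ := hmem
    have hdz : d z ≤ m := Nat.sInf_le hz
    obtain ⟨p, hp, hor⟩ := e
    rcases hor with ⟨h1, h2⟩ | ⟨h1, h2⟩
    · exact ⟨p, hp, Or.inr ⟨h2, by rw [h1, hm]; omega⟩⟩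
    · exact ⟨p, hp, Or.inl ⟨h1, by rw [h2, hm]; omega⟩⟩
  have hcard : (S.erase r).card ≤ L.toFinset.card := by
    apply Finset.card_le_card_of_injOn
      (fun x => if hx : ∃ p ∈ L, ((p.1 = x ∧ d p.2 < d x) ∨ (p.2 = x ∧ d p.1 < d x))
        then hx.choose else (0,0))
    · intro x hx
      have hex := key x hx
      simp only [dif_pos hex]
      exact List.mem_toFinset.2 hex.choose_spec.1
    · intro x hx y hy heq
      have hex := key x hx
      have hey := key y hy
      simp only [dif_pos hex, dif_pos hey] at heq
      obtain ⟨_, hpx⟩ := hex.choose_spec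
      obtain ⟨_, hpy⟩ := hey.choose_spec
      have e1 : hex.choose.1 = hey.choose.1 := by rw [heq]
      have e2 : hex.choose.2 = hey.choose.2 := by rw [heq]
      have ed1 : d hex.choose.1 = d hey.choose.1 := by rw [heq]
      have ed2 : d hex.choose.2 = d hey.choose.2 := by rw [heq]
      rcases hpx with ⟨h1, h2⟩ | ⟨h1, h2⟩ <;>
        rcases hpy with ⟨h3, h4⟩ | ⟨h3, h4⟩ <;>
        have c1 := congrArg d h1 <;> have c2 := congrArg d h3 <;> omega
  have h2 : S.card ≤ (S.erase r).card + 1 := by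
    have hsub : S ⊆ insert r (S.erase r) := by
      intro x hx
      by_cases hxr : x = r
      · exact hxr ▸ Finset.mem_insert_self _ _
      · exact Finset.mem_insert_of_mem (Finset.mem_erase.2 ⟨hxr, hx⟩)
    calc S.card ≤ (insert r (S.erase r)).card := Finset.card_le_card hsub
      _ ≤ (S.erase r).card + 1 := Finset.card_insert_le _ _
  have h3 := L.toFinset_card_le
  omega

lemma prefix_values (n : ℕ) (hn : 3 ≤ n) :
    ∀ m, m ≤ n - 1 → ∀ j,
      (((List.range m).map fun i => Equiv.swap n (n - 1 - i)).prod : Equiv.Perm ℕ) j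
        = if j = n then n - m else if n - m ≤ j ∧ j < n then j + 1 else j := by
  intro m
  induction m with
  | zero =>
    intro _ j
    simp only [List.range_zero, List.map_nil, List.prod_nil, Equiv.Perm.one_apply]
    split_ifs <;> omega
  | succ m ih =>
    intro hm j
    have hm' : m ≤ n - 1 := by omega
    rw [List.range_succ, List.map_append, List.prod_append]
    simp only [List.map_cons, List.map_nil, List.prod_cons, List.prod_nil, mul_one]
    rw [Equiv.Perm.mul_apply]
    rcases eq_or_ne j n with hj | hj
    · subst hj
      rw [Equiv.swap_apply_left, ih hm']
      split_ifs <;> omega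
    rcases eq_or_ne j (n - 1 - m) with hj2 | hj2
    · subst hj2
      rw [Equiv.swap_apply_right, ih hm']
      split_ifs <;> omega
    · rw [Equiv.swap_apply_of_ne_of_ne hj hj2, ih hm']
      split_ifs <;> omega

lemma val_prod (n : ℕ) (F : ℕ → Fin (n + 2)) (hF : ∀ x, x ≤ n + 1 → (F x : ℕ) = x) :
    ∀ (l : List (ℕ × ℕ)), (∀ p ∈ l, p.1 ≤ n + 1 ∧ p.2 ≤ n + 1) →
      ∀ y : Fin (n + 2),
        ((((l.map fun p => Equiv.swap (F p.1) (F p.2)).prod : Equiv.Perm (Fin (n+2))) y : Fin (n+2)) : ℕ)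
          = ((l.map fun p => Equiv.swap p.1 p.2).prod : Equiv.Perm ℕ) (y : ℕ) := by
  intro l
  induction l with
  | nil => intro _ y; simp
  | cons p l ih =>
    intro hl y
    rw [List.map_cons, List.prod_cons, List.map_cons, List.prod_cons,
        Equiv.Perm.mul_apply, Equiv.Perm.mul_apply]
    obtain ⟨h1, h2⟩ := hl p (List.mem_cons_self)
    have ihy := ih (fun q hq => hl q (List.mem_cons_of_mem _ hq)) y
    rw [← ihy]
    have hs := Fin.val_injective.swap_apply (F p.1) (F p.2)
      (((l.map fun p => Equiv.swap (F p.1) (F p.2)).prod : Equiv.Perm (Fin (n+2))) y)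
    rw [hF p.1 h1, hF p.2 h2] at hs
    exact hs.symm

end Stmt12Aux

/-- Theorem 3 (optimality part): for `n ≥ 3` and
`P₂ = (n, n-1)⋯(n 2)(n 1)` viewed in `S_{n+1}`, any product `F` of `k`
distinct transpositions of `S_{n+1}`, each distinct from all factors `(i n)`
of `P₂`, with `F · P₂ = 1`, has `k ≥ n + 1`. -/
theorem stmt12 (n k : ℕ) (hn : 3 ≤ n) (L : List (ℕ × ℕ))
    (hL : ∀ p ∈ L, p.1 ≠ p.2 ∧ p.1 ∈ Finset.Icc 1 (n + 1) ∧
      p.2 ∈ Finset.Icc 1 (n + 1))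
    (hdistinct : (L.map fun p => Equiv.swap p.1 p.2).Nodup)
    (havoid : ∀ p ∈ L, ∀ i, 1 ≤ i → i < n →
      Equiv.swap p.1 p.2 ≠ Equiv.swap i n)
    (hk : L.length = k)
    (hundo : (L.map fun p => Equiv.swap p.1 p.2).prod *
      ((List.range (n - 1)).map fun i => Equiv.swap n (n - 1 - i)).prod = 1) :
    n + 1 ≤ k := by
  classical
  subst hk
  set σ : Equiv.Perm ℕ := (L.map fun p => Equiv.swap p.1 p.2).prod with hσ
  set π : Equiv.Perm ℕ := ((List.range (n - 1)).map fun i => Equiv.swap n (n - 1 - i)).prod with hπ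
  have hinv : ∀ x, σ (π x) = x := by
    intro x
    rw [← Equiv.Perm.mul_apply, hundo, Equiv.Perm.one_apply]
  have hπval : ∀ j, 1 ≤ j → j ≤ n - 1 → π j = j + 1 := by
    intro j h1 h2
    rw [hπ, Stmt12Aux.prefix_values n hn (n - 1) le_rfl j]
    split_ifs <;> omega
  have hσval : ∀ j, 1 ≤ j → j ≤ n - 1 → σ (j + 1) = j := by
    intro j h1 h2
    have h := hinv j
    rwa [hπval j h1 h2] at h
  -- chain reachability 1 ~ 2 ~ ... ~ n
  have step : ∀ j, 1 ≤ j → j ≤ n - 1 → Stmt12Aux.Reach L (j + 1) j := by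
    intro j h1 h2
    have h := Stmt12Aux.reach_prod L L (fun p hp => hp) (j + 1)
    rw [← hσ, hσval j h1 h2] at h
    exact h
  have chain : ∀ j, 1 ≤ j → j ≤ n → Stmt12Aux.Reach L 1 j := by
    intro j h1 h2
    induction j with
    | zero => omega
    | succ m ih =>
      rcases Nat.eq_or_lt_of_le h1 with h | h
      · rw [← h]; exact Stmt12Aux.reach_refl L 1
      · have hm1 : 1 ≤ m := by omega
        exact Stmt12Aux.reach_trans (ih hm1 (by omega))
          (Stmt12Aux.reach_symm (step m hm1 (by omega)))
  -- the edge (n, n+1) exists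
  have hmoves : σ n ≠ n := by
    have hπn : π (n - 1) = n := by
      rw [hπval (n - 1) (by omega) le_rfl]; omega
    have h := hinv (n - 1)
    rw [hπn] at h
    omega
  have hmoves' : ((L.map fun p => Equiv.swap p.1 p.2).prod : Equiv.Perm ℕ) n ≠ n := by
    rw [← hσ]; exact hmoves
  obtain ⟨p, hpL, hpmoves⟩ := Stmt12Aux.exists_swap_moves L n hmoves'
  obtain ⟨hpne, hp1, hp2⟩ := hL p hpL
  rw [Finset.mem_Icc] at hp1 hp2
  have hn_end : p.1 = n ∨ p.2 = n := by
    by_contra hc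
    push_neg at hc
    exact hpmoves (Equiv.swap_apply_of_ne_of_ne (fun h => hc.1 h.symm) (fun h => hc.2 h.symm))
  have hedge : Stmt12Aux.EdgeRel L n (n + 1) := by
    rcases hn_end with h | h
    · have hj : p.2 = n + 1 := by
        by_contra hj
        have hjn : p.2 < n := by omega
        exact havoid p hpL p.2 (by omega) hjn (by rw [h]; exact Equiv.swap_comm _ _)
      exact ⟨p, hpL, Or.inl ⟨h, hj⟩⟩
    · have hj : p.1 = n + 1 := by
        by_contra hj
        have hjn : p.1 < n := by omega
        exact havoid p hpL p.1 (by omega) hjn (by rw [h])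
      exact ⟨p, hpL, Or.inr ⟨hj, h⟩⟩
  have hreach : ∀ x ∈ Finset.Icc 1 (n + 1), Stmt12Aux.Reach L 1 x := by
    intro x hx
    rw [Finset.mem_Icc] at hx
    rcases Nat.lt_or_ge x (n + 1) with h | h
    · exact chain x hx.1 (by omega)
    · have hx1 : x = n + 1 := by omega
      subst hx1
      exact Stmt12Aux.reach_tail (chain n (by omega) le_rfl) hedge
  have hcount := Stmt12Aux.card_le_of_reach L 1 (Finset.Icc 1 (n + 1)) hreach
  rw [Nat.card_Icc] at hcount
  -- parity argument in Perm (Fin (n+2))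
  set F : ℕ → Fin (n + 2) := fun x => ⟨min x (n + 1), by omega⟩ with hF
  have hFval : ∀ x, x ≤ n + 1 → (F x : ℕ) = x := by
    intro x hx
    simp [hF, Nat.min_eq_left hx]
  have hLbound : ∀ p ∈ L, p.1 ≤ n + 1 ∧ p.2 ≤ n + 1 := by
    intro p hp
    obtain ⟨_, h1, h2⟩ := hL p hp
    rw [Finset.mem_Icc] at h1 h2
    exact ⟨h1.2, h2.2⟩
  set Lπ : List (ℕ × ℕ) := (List.range (n - 1)).map fun i => (n, n - 1 - i) with hLπ
  have hLπbound : ∀ p ∈ Lπ, p.1 ≤ n + 1 ∧ p.2 ≤ n + 1 := by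
    intro p hp
    rw [hLπ, List.mem_map] at hp
    obtain ⟨i, _, rfl⟩ := hp
    constructor <;> simp <;> omega
  have hπshape : ((List.range (n - 1)).map fun i => Equiv.swap n (n - 1 - i))
      = Lπ.map fun p => Equiv.swap p.1 p.2 := by
    rw [hLπ, List.map_map]; rfl
  have hπshapeF : ((List.range (n - 1)).map fun i => Equiv.swap (F n) (F (n - 1 - i)))
      = Lπ.map fun p => Equiv.swap (F p.1) (F p.2) := by
    rw [hLπ, List.map_map]; rfl
  have hfin : ((L.map fun p => Equiv.swap (F p.1) (F p.2)).prod : Equiv.Perm (Fin (n + 2))) *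
      ((List.range (n - 1)).map fun i => Equiv.swap (F n) (F (n - 1 - i))).prod = 1 := by
    apply Equiv.ext
    intro y
    apply Fin.val_injective
    rw [Equiv.Perm.mul_apply, Equiv.Perm.one_apply, hπshapeF,
      Stmt12Aux.val_prod n F hFval L hLbound,
      Stmt12Aux.val_prod n F hFval Lπ hLπbound y]
    have : (Lπ.map fun p => Equiv.swap p.1 p.2).prod = π := by
      rw [hπ, hπshape]
    rw [this, hinv]
  have hswapL : ∀ g ∈ L.map fun p => Equiv.swap (F p.1) (F p.2), g.IsSwap := by
    intro g hg
    rw [List.mem_map] at hg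
    obtain ⟨p, hp, rfl⟩ := hg
    obtain ⟨hne, _, _⟩ := hL p hp
    obtain ⟨h1, h2⟩ := hLbound p hp
    refine ⟨F p.1, F p.2, ?_, rfl⟩
    intro h
    apply hne
    have hv := congrArg Fin.val h
    rwa [hFval _ h1, hFval _ h2] at hv
  have hswapP : ∀ g ∈ (List.range (n - 1)).map fun i => Equiv.swap (F n) (F (n - 1 - i)),
      g.IsSwap := by
    intro g hg
    rw [List.mem_map] at hg
    obtain ⟨i, hi, rfl⟩ := hg
    rw [List.mem_range] at hi
    refine ⟨F n, F (n - 1 - i), ?_, rfl⟩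
    intro h
    have hv := congrArg Fin.val h
    rw [hFval _ (by omega), hFval _ (by omega)] at hv
    omega
  have hsign := congrArg Equiv.Perm.sign hfin
  rw [map_mul, map_one, Equiv.Perm.sign_prod_list_swap hswapL,
    Equiv.Perm.sign_prod_list_swap hswapP, List.length_map, List.length_map,
    List.length_range, ← pow_add] at hsign
  have heven : Even (L.length + (n - 1)) := by
    have hz := congrArg Units.val hsign
    rw [Units.val_pow_eq_pow_val, Units.val_one, Units.val_neg, Units.val_one] at hz
    exact (neg_one_pow_eq_one_iff_even (by norm_num : (-1 : ℤ) ≠ 1)).1 hz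
  obtain ⟨c, hc⟩ := heven
  omega
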